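/- Let d be a positive integer and δ > 0. Let N be a nonempty finite set of points of d-dimensional Euclidean space, each of Euclidean norm at most 1, and let x be a point of Euclidean norm at most 1. Then the Euclidean distance from x to the convex hull of N is at most 2δ if and only if there exist NO u, w in the space with ‖u‖₂ ≤ 1, ‖w‖₂ = 1, ⟨w, x + u⟩ ≥ δ, and ⟨w, y + u⟩ < −δ for all y ∈ N. (Equivalently, for the class of d-dimensional hyperplanes with margin δ, the safe region S_F(N) equals the intersection of the unit ball with the 2δ-neighborhood of the convex hull of N.) -/

import Mathlib

open scoped RealInnerProductSpace

/-- Characterization of the safe region for hyperplanes with margin `δ`: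
`x` lies within Euclidean distance `2δ` of the convex hull of `N` if and only if no
hyperplane with margin `δ` (given by `u, w` with `‖u‖ ≤ 1`, `‖w‖ = 1`) separates `x`
positively from `N`. -/
theorem stmt_6 (d : ℕ) (hd : 0 < d) (δ : ℝ) (hδ : 0 < δ)
    (N : Finset (EuclideanSpace ℝ (Fin d))) (hN : N.Nonempty)
    (hNnorm : ∀ y ∈ N, ‖y‖ ≤ 1)
    (x : EuclideanSpace ℝ (Fin d)) (hx : ‖x‖ ≤ 1) :
    Metric.infDist x (convexHull ℝ (N : Set (EuclideanSpace ℝ (Fin d)))) ≤ 2 * δ ↔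
      ¬ ∃ u w : EuclideanSpace ℝ (Fin d), ‖u‖ ≤ 1 ∧ ‖w‖ = 1 ∧
        δ ≤ ⟪w, x + u⟫ ∧ ∀ y ∈ N, ⟪w, y + u⟫ < -δ := by
  set K : Set (EuclideanSpace ℝ (Fin d)) := convexHull ℝ (N : Set (EuclideanSpace ℝ (Fin d)))
  have hKne : K.Nonempty := ⟨hN.choose, subset_convexHull ℝ _ hN.choose_spec⟩
  have hKcvx : Convex ℝ K := convex_convexHull ℝ _
  have hKcpt : IsCompact K := N.finite_toSet.isCompact_convexHull ℝ
  have hKball : ∀ p ∈ K, ‖p‖ ≤ 1 := by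
    intro p hp
    have : K ⊆ Metric.closedBall 0 1 := by
      apply convexHull_min _ (convex_closedBall 0 1)
      intro y hy
      simpa [Metric.mem_closedBall, dist_eq_norm] using hNnorm y hy
    simpa [Metric.mem_closedBall, dist_eq_norm] using this hp
  constructor
  · rintro hle ⟨u, w, hu, hw, hxu, hyu⟩
    obtain ⟨p, hpK, hpd⟩ := hKcpt.exists_infDist_eq_dist hKne x
    have hph : ⟪w, p⟫ < -δ - ⟪w, u⟫ := by
      have hsub : K ⊆ {q | ⟪w, q⟫ < -δ - ⟪w, u⟫} := by
        apply convexHull_min _ (convex_halfSpace_lt ⟨fun a b => inner_add_right w a b,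
          fun c a => real_inner_smul_right w a c⟩ _)
        intro y hy
        have := hyu y hy
        simp only [inner_add_right] at this
        simp only [Set.mem_setOf_eq]
        linarith
      exact hsub hpK
    have hcs : ⟪w, x - p⟫ ≤ ‖x - p‖ := by
      calc ⟪w, x - p⟫ ≤ ‖w‖ * ‖x - p‖ := real_inner_le_norm _ _
        _ = ‖x - p‖ := by rw [hw]; ring
    have hxp : 2 * δ < ⟪w, x - p⟫ := by
      rw [inner_sub_right]
      simp only [inner_add_right] at hxu
      linarith
    rw [hpd, dist_eq_norm] at hle
    linarith
  · intro h
    by_contra h2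
    push_neg at h2
    apply h
    obtain ⟨v, hvK, hvd⟩ := exists_norm_eq_iInf_of_complete_convex hKne
      (hKcpt.isClosed.isComplete) hKcvx x
    have hproj : ∀ y ∈ K, ⟪x - v, y - v⟫ ≤ 0 :=
      (norm_eq_iInf_iff_real_inner_le_zero hKcvx hvK).mp hvd
    have hinf : Metric.infDist x K = ‖x - v‖ := by
      rw [Metric.infDist_eq_iInf, hvd]
      simp [dist_eq_norm]
    have hdist : 2 * δ < ‖x - v‖ := by rw [← hinf]; exact h2
    have hxvpos : (0 : ℝ) < ‖x - v‖ := by linarith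
    set w : EuclideanSpace ℝ (Fin d) := ‖x - v‖⁻¹ • (x - v) with hwdef
    have hwnorm : ‖w‖ = 1 := by
      rw [hwdef, norm_smul, norm_inv, norm_norm]
      field_simp
    have hwxv : ⟪w, x - v⟫ = ‖x - v‖ := by
      rw [hwdef, real_inner_smul_left, real_inner_self_eq_norm_sq]
      field_simp
    have hwx : ⟪w, x⟫ = ⟪w, v⟫ + ‖x - v‖ := by
      have := hwxv
      rw [inner_sub_right] at this
      linarith
    have hwxle : ⟪w, x⟫ ≤ 1 := by
      calc ⟪w, x⟫ ≤ ‖w‖ * ‖x‖ := real_inner_le_norm _ _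
        _ ≤ 1 := by rw [hwnorm]; simpa using hx
    have hwv : -1 ≤ ⟪w, v⟫ := by
      have h1 : -(‖w‖ * ‖v‖) ≤ ⟪w, v⟫ := neg_le_of_abs_le (abs_real_inner_le_norm w v)
      have h2 : ‖v‖ ≤ 1 := hKball v hvK
      rw [hwnorm] at h1
      nlinarith
    set m : ℝ := ⟪w, x⟫ - δ with hmdef
    refine ⟨-(m • w), w, ?_, hwnorm, ?_, ?_⟩
    · rw [norm_neg, norm_smul, hwnorm, mul_one]
      rw [Real.norm_eq_abs, abs_le]
      constructor <;> [nlinarith; nlinarith [Real.norm_natCast 0]]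
    · rw [inner_add_right, inner_neg_right, real_inner_smul_right,
        real_inner_self_eq_norm_sq, hwnorm]
      simp [hmdef]
    · intro y hy
      have hyK : (y : EuclideanSpace ℝ (Fin d)) ∈ K := subset_convexHull ℝ _ hy
      have := hproj y hyK
      have hwy : ⟪w, y - v⟫ ≤ 0 := by
        rw [hwdef, real_inner_smul_left]
        have : (0:ℝ) ≤ ‖x - v‖⁻¹ := by positivity
        nlinarith [hproj y hyK]
      rw [inner_sub_right] at hwy
      rw [inner_add_right, inner_neg_right, real_inner_smul_right,
        real_inner_self_eq_norm_sq, hwnorm]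
      simp only [hmdef]
      nlinarith
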